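/- In a distributive meet-semilattice, a proper filter F is irreducible if and only if its complement A − F is an order ideal. -/
import Mathlib


namespace DS

variable {A : Type*} [SemilatticeInf A] [OrderTop A]

/-- A filter: an upset containing the top element, closed under meets. -/
def IsFilt (F : Set A) : Prop :=
  IsUpperSet F ∧ ⊤ ∈ F ∧ ∀ ⦃a b : A⦄, a ∈ F → b ∈ F → a ⊓ b ∈ F

/-- An irreducible (prime) filter: a proper filter that is meet-irreducible
among filters. -/
def IsIrred (F : Set A) : Prop :=
  IsFilt F ∧ F ≠ Set.univ ∧
    ∀ F₁ F₂ : Set A, IsFilt F₁ → IsFilt F₂ → F = F₁ ∩ F₂ → F = F₁ ∨ F = F₂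

/-- An order ideal: a downset in which every pair of elements has an upper
bound in the set. -/
def IsOrdIdeal (I : Set A) : Prop :=
  IsLowerSet I ∧ ∀ a ∈ I, ∀ b ∈ I, ∃ c ∈ I, a ≤ c ∧ b ≤ c

/-- Distributivity for a meet-semilattice with top. -/
def IsDistrib (A : Type*) [SemilatticeInf A] [OrderTop A] : Prop :=
  ∀ a b c : A, a ⊓ b ≤ c → ∃ a₁ b₁ : A, a ≤ a₁ ∧ b ≤ b₁ ∧ c = a₁ ⊓ b₁

/-- The set of irreducible filters of `A`, ordered by inclusion. -/
def Spec (A : Type*) [SemilatticeInf A] [OrderTop A] : Type _ :=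
  {P : Set A // IsIrred P}

instance : PartialOrder (Spec A) := Subtype.partialOrder _

/-- `beta a` = the set of irreducible filters containing `a`. -/
def beta (a : A) : Set (Spec A) := {P : Spec A | a ∈ P.1}

/-- The topology on `Spec A` generated by the basis `{beta aᶜ : a ∈ A}`. -/
def specTop (A : Type*) [SemilatticeInf A] [OrderTop A] : TopologicalSpace (Spec A) :=
  TopologicalSpace.generateFrom {s : Set (Spec A) | ∃ a : A, s = (beta a)ᶜ}

/-- Special basic saturated subsets: intersections of dually directed families
of basic opens `beta aᶜ`. -/
def SBS (Z : Set (Spec A)) : Prop :=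
  ∃ L : Set A, (∀ a ∈ L, ∀ b ∈ L, ∃ c ∈ L, beta a ∪ beta b ⊆ beta c) ∧
    Z = ⋂ a ∈ L, (beta a)ᶜ

/-- The order ideal associated to a special basic saturated set. -/
def IA (Z : Set (Spec A)) : Set A := {a : A | beta a ∩ Z = ∅}

/-- The special basic saturated set associated to an order ideal. -/
def alphaI (I : Set A) : Set (Spec A) := {P : Spec A | P.1 ∩ I = ∅}

/-- The filter associated to a closed set. -/
def FY (Y : Set (Spec A)) : Set A := {a : A | Y ⊆ beta a}

/-- The multirelation `R_m` on the dual space. -/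
def Rm (m : A → A) (P : Spec A) (Z : Set (Spec A)) : Prop :=
  {a : A | m a ∈ P.1} ∩ IA Z = ∅

/-- The multirelation `G_m` on the dual space. -/
def Gm (m : A → A) (P : Spec A) (Y : Set (Spec A)) : Prop :=
  FY Y ⊆ {a : A | m a ∈ P.1}

/-- The composed relation `R_m²`. -/
def Rm2 (m : A → A) (P : Spec A) (Z : Set (Spec A)) : Prop :=
  ∃ S : Set (Spec A), SBS S ∧ Rm m P S ∧ ∀ x ∈ S, Rm m x Z

end DS

open DS Set

theorem stmt1 {A : Type*} [SemilatticeInf A] [OrderTop A] (hA : IsDistrib A)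
    (F : Set A) (hF : IsFilt F) (hprop : F ≠ Set.univ) :
    IsIrred F ↔ IsOrdIdeal Fᶜ := by
  constructor
  · rintro ⟨-, -, hirr⟩
    refine ⟨fun x y hle hx hyF => hx (hF.1 hle hyF), ?_⟩
    intro a ha b hb
    by_contra hc
    push_neg at hc
    have hub : ∀ c : A, a ≤ c → b ≤ c → c ∈ F := by
      intro c hac hbc
      by_contra hcF
      exact hc c hcF hac hbc
    set F₁ : Set A := {x | ∃ f ∈ F, f ⊓ a ≤ x} with hF₁def
    set F₂ : Set A := {x | ∃ f ∈ F, f ⊓ b ≤ x} with hF₂def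
    have hfilt : ∀ (d : A), IsFilt {x : A | ∃ f ∈ F, f ⊓ d ≤ x} := by
      intro d
      refine ⟨fun x y hxy ⟨f, hf, hfx⟩ => ⟨f, hf, hfx.trans hxy⟩, ⟨⊤, hF.2.1, le_top⟩, ?_⟩
      rintro x y ⟨f, hf, hfx⟩ ⟨g, hg, hgy⟩
      exact ⟨f ⊓ g, hF.2.2 hf hg, le_inf
        ((inf_le_inf_right d inf_le_left).trans hfx)
        ((inf_le_inf_right d inf_le_right).trans hgy)⟩
    have hEq : F = F₁ ∩ F₂ := by
      apply Set.Subset.antisymm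
      · intro x hx
        exact ⟨⟨x, hx, inf_le_left⟩, ⟨x, hx, inf_le_left⟩⟩
      · rintro x ⟨⟨f, hf, hfx⟩, ⟨g, hg, hgx⟩⟩
        have hh : f ⊓ g ∈ F := hF.2.2 hf hg
        have h1 : (f ⊓ g) ⊓ a ≤ x := (inf_le_inf_right a inf_le_left).trans hfx
        have h2 : (f ⊓ g) ⊓ b ≤ x := (inf_le_inf_right b inf_le_right).trans hgx
        obtain ⟨h₁, a₁, hh₁, ha₁, hx1⟩ := hA _ _ _ h1
        have h3 : (f ⊓ g) ⊓ b ≤ a₁ := h2.trans (hx1.le.trans inf_le_right)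
        obtain ⟨h₂, b₁, hh₂, hb₁, hx2⟩ := hA _ _ _ h3
        have hb₁F : b₁ ∈ F := hub b₁ (ha₁.trans (hx2.le.trans inf_le_right)) hb₁
        have ha₁F : a₁ ∈ F := by
          rw [hx2]; exact hF.2.2 (hF.1 hh₂ hh) hb₁F
        rw [hx1]
        exact hF.2.2 (hF.1 hh₁ hh) ha₁F
    rcases hirr F₁ F₂ (hfilt a) (hfilt b) hEq with h | h
    · exact ha (h ▸ ⟨⊤, hF.2.1, by simp⟩)
    · exact hb (h ▸ ⟨⊤, hF.2.1, by simp⟩)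
  · rintro ⟨hdown, hdir⟩
    refine ⟨hF, hprop, ?_⟩
    intro F₁ F₂ h₁ h₂ hEq
    by_contra hne
    push_neg at hne
    have hs₁ : F ⊆ F₁ := hEq ▸ Set.inter_subset_left
    have hs₂ : F ⊆ F₂ := hEq ▸ Set.inter_subset_right
    obtain ⟨a, ha₁, haF⟩ : ∃ a, a ∈ F₁ ∧ a ∉ F := by
      by_contra h; push_neg at h
      exact hne.1 (Set.Subset.antisymm hs₁ h)
    obtain ⟨b, hb₂, hbF⟩ : ∃ b, b ∈ F₂ ∧ b ∉ F := by
      by_contra h; push_neg at h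
      exact hne.2 (Set.Subset.antisymm hs₂ h)
    obtain ⟨c, hcF, hac, hbc⟩ := hdir a haF b hbF
    exact hcF (hEq ▸ ⟨h₁.1 hac ha₁, h₂.1 hbc hb₂⟩)
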